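/- Let φ(x,y,u) = u(1−y) − x²/2, and let e₁ = (1−y)∂ₓ + x∂ᵤ and e₂ = (1−y)∂_y + u∂ᵤ. Then at every point p = (x,y,u) with y < 1 and φ(p) = 0, the vectors e₁(p) and e₂(p) are linearly independent and span the kernel of the differential dφ(p); i.e. the tangent fields e₁, e₂ span the full tangent plane of the graph {u = x²/(2(1−y))} at each of its points. Consequently the surface is affinely locally homogeneous. -/

import Mathlib

/-- `φ(x,y,u) = u(1−y) − x²/2`. -/
noncomputable def phiFlat : ℝ × ℝ × ℝ → ℝ := fun p => p.2.2 * (1 - p.2.1) - p.1 ^ 2 / 2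

/-- `e₁ = (1−y)∂ₓ + x∂ᵤ`. -/
noncomputable def e1Flat : ℝ × ℝ × ℝ → ℝ × ℝ × ℝ := fun p => (1 - p.2.1, 0, p.1)

/-- `e₂ = (1−y)∂_y + u∂ᵤ`. -/
noncomputable def e2Flat : ℝ × ℝ × ℝ → ℝ × ℝ × ℝ := fun p => (0, 1 - p.2.1, p.2.2)

lemma fderiv_phiFlat_apply (p v : ℝ × ℝ × ℝ) :
    fderiv ℝ phiFlat p v = p.2.2 * (-v.2.1) + (1 - p.2.1) * v.2.2 - 2 * p.1 * v.1 / 2 := by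
  have hx : HasFDerivAt (fun q : ℝ × ℝ × ℝ => q.1)
      (ContinuousLinearMap.fst ℝ ℝ (ℝ × ℝ)) p := hasFDerivAt_fst
  have hs : HasFDerivAt (fun q : ℝ × ℝ × ℝ => q.2)
      (ContinuousLinearMap.snd ℝ ℝ (ℝ × ℝ)) p := hasFDerivAt_snd
  have hy := hs.fst
  have hu := hs.snd
  have hc : HasFDerivAt (fun _ : ℝ × ℝ × ℝ => (1 : ℝ)) (0 : (ℝ × ℝ × ℝ) →L[ℝ] ℝ) p := hasFDerivAt_const 1 p
  have hx2 := hx.mul hx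
  have h := (hu.mul (hc.sub hy)).sub (hx2.const_mul (2⁻¹ : ℝ))
  have hrw : phiFlat = fun q : ℝ × ℝ × ℝ => q.2.2 * (1 - q.2.1) - 2⁻¹ * (q.1 * q.1) := by
    funext q; simp [phiFlat]; ring
  rw [hrw, (show HasFDerivAt (fun q : ℝ × ℝ × ℝ => q.2.2 * (1 - q.2.1) - 2⁻¹ * (q.1 * q.1)) _ p from h).fderiv]
  simp [ContinuousLinearMap.sub_apply, ContinuousLinearMap.smul_apply]
  ring

/-- At every point `p` of the graph `{u = x²/(2(1−y)), y < 1}` (i.e. `φ(p) = 0`, `y < 1`),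
the vectors `e₁(p)`, `e₂(p)` are linearly independent and span `ker dφ(p)`, the full
tangent plane of the graph at `p`. -/
theorem flat_model_tangent_span :
    ∀ p : ℝ × ℝ × ℝ, p.2.1 < 1 → phiFlat p = 0 →
      LinearIndependent ℝ ![e1Flat p, e2Flat p] ∧
      Submodule.span ℝ {e1Flat p, e2Flat p} = LinearMap.ker (fderiv ℝ phiFlat p : ℝ × ℝ × ℝ →ₗ[ℝ] ℝ) := by
  intro p hy hφ
  have hne : (1 : ℝ) - p.2.1 ≠ 0 := by linarith
  constructor
  · rw [LinearIndependent.pair_iff]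
    intro s t hst
    simp only [e1Flat, e2Flat, Prod.smul_mk, smul_eq_mul, Prod.mk_add_mk, Prod.mk_eq_zero,
      mul_zero, zero_add, add_zero, mul_eq_zero] at hst
    obtain ⟨h1, h2, -⟩ := hst
    exact ⟨h1.resolve_right hne, h2.resolve_right hne⟩
  · ext v
    rw [Submodule.mem_span_pair, LinearMap.mem_ker, ContinuousLinearMap.coe_coe, fderiv_phiFlat_apply]
    constructor
    · rintro ⟨a, b, rfl⟩
      simp only [e1Flat, e2Flat, Prod.smul_mk, smul_eq_mul, Prod.mk_add_mk]
      ring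
    · intro h
      refine ⟨v.1 / (1 - p.2.1), v.2.1 / (1 - p.2.1), ?_⟩
      simp only [e1Flat, e2Flat, Prod.smul_mk, smul_eq_mul, Prod.mk_add_mk]
      have h3 : v.2.2 = (v.1 * p.1 + v.2.1 * p.2.2) / (1 - p.2.1) := by
        field_simp
        nlinarith [h]
      have : v = (v.1, v.2.1, v.2.2) := rfl
      rw [this, h3]
      refine Prod.ext ?_ (Prod.ext ?_ ?_) <;> simp <;> field_simp
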